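/- For a nonempty compact set K ⊆ ℝ^d, any p ≥ 1, and any norm ‖·‖ on ℝ^d, the convex envelope of the function W(η) = dist^p(η, K) is W^co(η) = dist^p(η, conv K). -/
import Mathlib

open Set

/-- `N` is a norm on the real vector space `V`. -/
def IsNorm {V : Type*} [AddCommGroup V] [Module ℝ V] (N : V → ℝ) : Prop :=
  (∀ x y, N (x + y) ≤ N x + N y) ∧ (∀ (a : ℝ) (x : V), N (a • x) = |a| * N x) ∧
    (∀ x, N x = 0 ↔ x = 0)

/-- Distance of a point to a set, measured in the norm `N`. -/
noncomputable def distTo {V : Type*} [AddCommGroup V] [Module ℝ V]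
    (N : V → ℝ) (K : Set V) (x : V) : ℝ :=
  sInf ((fun k => N (x - k)) '' K)

/-- `g` is the convex envelope of `W`: the largest convex function below `W`. -/
def IsConvexEnv {V : Type*} [AddCommGroup V] [Module ℝ V] (W g : V → ℝ) : Prop :=
  ConvexOn ℝ Set.univ g ∧ g ≤ W ∧
    ∀ h : V → ℝ, ConvexOn ℝ Set.univ h → h ≤ W → h ≤ g

section aux

variable {V : Type*} [AddCommGroup V] [Module ℝ V] {N : V → ℝ} (hN : IsNorm N)
include hN

lemma IsNorm.nonneg (x : V) : 0 ≤ N x := by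
  have h0 : N 0 = 0 := by
    have := hN.2.1 0 0
    simpa using this
  have h1 : N (x + (-1 : ℝ) • x) ≤ N x + N ((-1 : ℝ) • x) := hN.1 _ _
  rw [hN.2.1 (-1) x] at h1
  simp only [neg_smul, one_smul, add_neg_cancel, h0, abs_neg, abs_one, one_mul] at h1
  linarith

lemma distTo_bddBelow (K : Set V) (x : V) : BddBelow ((fun k => N (x - k)) '' K) := by
  refine ⟨0, fun y hy => ?_⟩
  rcases hy with ⟨k, _, rfl⟩
  exact hN.nonneg _

lemma distTo_nonneg (K : Set V) (hK : K.Nonempty) (x : V) : 0 ≤ distTo N K x :=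
  le_csInf (hK.image _) (by rintro y ⟨k, _, rfl⟩; exact hN.nonneg _)

lemma distTo_le (K : Set V) (x k : V) (hk : k ∈ K) : distTo N K x ≤ N (x - k) :=
  csInf_le (distTo_bddBelow hN K x) ⟨k, hk, rfl⟩

lemma distTo_convexOn {C : Set V} (hC : Convex ℝ C) (hCne : C.Nonempty) :
    ConvexOn ℝ Set.univ (distTo N C) := by
  refine ⟨convex_univ, fun x _ y _ a b ha hb hab => ?_⟩
  refine le_of_forall_pos_le_add (fun ε hε => ?_)
  obtain ⟨u, hu, hult⟩ := Real.lt_sInf_add_pos (hCne.image (fun k => N (x - k))) hε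
  obtain ⟨v, hv, hvlt⟩ := Real.lt_sInf_add_pos (hCne.image (fun k => N (y - k))) hε
  obtain ⟨kx, hkx, rfl⟩ := hu
  obtain ⟨ky, hky, rfl⟩ := hv
  have hmem : a • kx + b • ky ∈ C := hC hkx hky ha hb hab
  calc distTo N C (a • x + b • y) ≤ N (a • x + b • y - (a • kx + b • ky)) :=
        distTo_le hN C _ _ hmem
    _ = N (a • (x - kx) + b • (y - ky)) := by congr 1; module
    _ ≤ N (a • (x - kx)) + N (b • (y - ky)) := hN.1 _ _
    _ = a * N (x - kx) + b * N (y - ky) := by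
        rw [hN.2.1 a, hN.2.1 b, abs_of_nonneg ha, abs_of_nonneg hb]
    _ ≤ a * (distTo N C x + ε) + b * (distTo N C y + ε) := by
        apply add_le_add
        · exact mul_le_mul_of_nonneg_left hult.le ha
        · exact mul_le_mul_of_nonneg_left hvlt.le hb
    _ = a • distTo N C x + b • distTo N C y + ε := by
        simp only [smul_eq_mul]; nlinarith [hab]

end aux

theorem stmt5 {d : ℕ} (K : Set (Fin d → ℝ))
    (hKne : K.Nonempty) (hKc : IsCompact K)
    (N : (Fin d → ℝ) → ℝ) (hN : IsNorm N)
    (p : ℝ) (hp : 1 ≤ p)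
    (W : (Fin d → ℝ) → ℝ) (hW : ∀ η, W η = distTo N K η ^ p) :
    IsConvexEnv W (fun η => distTo N (convexHull ℝ K) η ^ p) := by
  have hp0 : (0:ℝ) < p := lt_of_lt_of_le one_pos hp
  have hCne : (convexHull ℝ K).Nonempty := hKne.mono (subset_convexHull ℝ K)
  have hCconv : Convex ℝ (convexHull ℝ K) := convex_convexHull ℝ K
  have hdconv : ConvexOn ℝ Set.univ (distTo N (convexHull ℝ K)) :=
    distTo_convexOn hN hCconv hCne
  have hdnn : ∀ η, 0 ≤ distTo N (convexHull ℝ K) η := distTo_nonneg hN _ hCne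
  refine ⟨?_, ?_, ?_⟩
  · -- convexity of dist^p
    refine ⟨convex_univ, fun x _ y _ a b ha hb hab => ?_⟩
    have h1 : distTo N (convexHull ℝ K) (a • x + b • y) ≤
        a * distTo N (convexHull ℝ K) x + b * distTo N (convexHull ℝ K) y :=
      hdconv.2 (mem_univ x) (mem_univ y) ha hb hab
    have h2 : distTo N (convexHull ℝ K) (a • x + b • y) ^ p ≤
        (a * distTo N (convexHull ℝ K) x + b * distTo N (convexHull ℝ K) y) ^ p :=
      Real.rpow_le_rpow (hdnn _) h1 hp0.le
    refine h2.trans ?_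
    have := (convexOn_rpow hp).2 (mem_Ici.mpr (hdnn x)) (mem_Ici.mpr (hdnn y)) ha hb hab
    simpa using this
  · -- below W
    intro η
    rw [hW η]
    refine Real.rpow_le_rpow (hdnn η) ?_ hp0.le
    exact le_csInf (hKne.image _)
      (by rintro u ⟨k, hk, rfl⟩; exact distTo_le hN _ _ _ (subset_convexHull ℝ K hk))
  · -- maximality
    intro h hconv hle η
    set D := distTo N (convexHull ℝ K) η with hD
    have key : ∀ ε : ℝ, 0 < ε → h η ≤ (D + ε) ^ p := by
      intro ε hε
      obtain ⟨u, hu, hult⟩ := Real.lt_sInf_add_pos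
        (hCne.image (fun k => N (η - k))) hε
      obtain ⟨k, hkC, rfl⟩ := hu
      rw [convexHull_eq] at hkC
      obtain ⟨ι, t, w, z, hw0, hw1, hzK, hcm⟩ := hkC
      have hηeq : η = t.centerMass w (fun i => η - k + z i) := by
        rw [Finset.centerMass_eq_of_sum_1 _ _ hw1]
        have hk : ∑ i ∈ t, w i • z i = k := by
          rw [← Finset.centerMass_eq_of_sum_1 _ _ hw1, hcm]
        simp only [smul_add]
        rw [Finset.sum_add_distrib, hk, ← Finset.sum_smul, hw1]
        module
      have hjen : h η ≤ ∑ i ∈ t, w i * h (η - k + z i) := by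
        have hcm2 := hconv.map_centerMass_le (p := fun i => η - k + z i) hw0
          (by rw [hw1]; exact one_pos) (fun i _ => mem_univ _)
        rw [← hηeq] at hcm2
        refine hcm2.trans (le_of_eq ?_)
        rw [Finset.centerMass_eq_of_sum_1 _ _ hw1]
        simp [Function.comp, smul_eq_mul]
      refine hjen.trans ?_
      have hterm : ∀ i ∈ t, h (η - k + z i) ≤ (D + ε) ^ p := by
        intro i hi
        refine (hle _).trans ?_
        rw [hW]
        refine Real.rpow_le_rpow (distTo_nonneg hN _ hKne _) ?_ hp0.le
        have h1 : distTo N K (η - k + z i) ≤ N (η - k + z i - z i) :=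
          distTo_le hN _ _ _ (hzK i hi)
        have h2 : N (η - k + z i - z i) = N (η - k) := by congr 1; abel
        have h3 : N (η - k) ≤ D + ε := by
          refine le_trans ?_ (le_of_eq rfl)
          simpa [hD, distTo] using hult.le
        rw [h2] at h1
        exact h1.trans h3
      calc ∑ i ∈ t, w i * h (η - k + z i) ≤ ∑ i ∈ t, w i * (D + ε) ^ p := by
            refine Finset.sum_le_sum (fun i hi => ?_)
            exact mul_le_mul_of_nonneg_left (hterm i hi) (hw0 i hi)
        _ = (D + ε) ^ p := by rw [← Finset.sum_mul, hw1, one_mul]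
    -- take ε → 0
    have hcont : Filter.Tendsto (fun ε : ℝ => (D + ε) ^ p) (nhdsWithin 0 (Ioi 0)) (nhds (D ^ p)) := by
      have h1 : ContinuousAt (fun x : ℝ => x ^ p) D :=
        Real.continuousAt_rpow_const D p (Or.inr hp0.le)
      have h2 : Filter.Tendsto (fun ε : ℝ => D + ε) (nhdsWithin 0 (Ioi 0)) (nhds D) := by
        have : Filter.Tendsto (fun ε : ℝ => D + ε) (nhds 0) (nhds (D + 0)) :=
          (continuous_const.add continuous_id).tendsto 0
        simpa using this.mono_left nhdsWithin_le_nhds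
      exact h1.tendsto.comp h2
    exact ge_of_tendsto hcont (Filter.eventually_of_mem self_mem_nhdsWithin
      (fun ε hε => key ε hε))
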